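/- Let E be a group of order 16 containing a subgroup D isomorphic to the quaternion group Q₈ and containing an element of order 8. Then E is isomorphic to the generalized quaternion group Q₁₆ of order 16 or to the semidihedral group SD₁₆ of order 16. -/

import Mathlib

section helpers

lemma aux_pw_natCast {G : Type*} [Group G] {a : G} {m : ℕ} [NeZero m] (h : a ^ m = 1) (n : ℕ) :
    a ^ n = a ^ ((n : ZMod m)).val := by
  rw [ZMod.val_natCast]
  conv_lhs => rw [← Nat.div_add_mod n m]
  rw [pow_add, pow_mul, h, one_pow, one_mul]

lemma aux_pw_mul {G : Type*} [Group G] {a : G} {m : ℕ} [NeZero m] (h : a ^ m = 1) (i j : ZMod m) :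
    a ^ i.val * a ^ j.val = a ^ (i + j).val := by
  have hc : ((i.val + j.val : ℕ) : ZMod m) = i + j := by
    push_cast [ZMod.natCast_val, ZMod.cast_id]
    ring
  rw [← pow_add, aux_pw_natCast h, hc]

lemma aux_pw_inv {G : Type*} [Group G] {a : G} {m : ℕ} [NeZero m] (h : a ^ m = 1) (i : ZMod m) :
    a ^ ((-i).val) = (a ^ i.val)⁻¹ := by
  have := aux_pw_mul h (-i) i
  rw [neg_add_cancel, ZMod.val_zero, pow_zero] at this
  exact eq_inv_of_mul_eq_one_left this

lemma aux_normal {G : Type*} [Group G] (H : Subgroup G) (h : H.index = 2) : H.Normal := by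
  constructor
  intro x hx g
  rw [Subgroup.mul_mem_iff_of_index_two h, Subgroup.mul_mem_iff_of_index_two h, H.inv_mem_iff]
  tauto

lemma aux_top {E : Type*} [Group E] [Fintype E] (hcard : Fintype.card E = 16) {a b : E}
    (ha : orderOf a = 8) (hb : b ∉ Subgroup.zpowers a) (H : Subgroup E)
    (haH : a ∈ H) (hbH : b ∈ H) : H = ⊤ := by
  have hA : Subgroup.zpowers a ≤ H := Subgroup.zpowers_le.2 haH
  have h8 : (8 : ℕ) ∣ Nat.card H := by
    have := Subgroup.card_dvd_of_le hA
    rwa [Nat.card_zpowers, ha] at this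
  have hE : Nat.card E = 16 := by rw [Nat.card_eq_fintype_card, hcard]
  have h16 : Nat.card H ∣ 16 := hE ▸ Subgroup.card_subgroup_dvd_card H
  have hpos : 0 < Nat.card H := Nat.card_pos
  have hne : Nat.card H ≠ 8 := by
    intro h
    have : Subgroup.zpowers a = H :=
      Subgroup.eq_of_le_of_card_ge hA (by rw [h, Nat.card_zpowers, ha])
    exact hb (this ▸ hbH)
  have hle : Nat.card H ≤ 16 := Nat.le_of_dvd (by norm_num) h16
  have : Nat.card H = 16 := by omega
  exact Subgroup.eq_top_of_card_eq H (by rw [this, hE])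

lemma aux_q16 {E : Type*} [Group E] [Fintype E] (hcard : Fintype.card E = 16) {a b : E}
    (ha : orderOf a = 8) (hbA : b ∉ Subgroup.zpowers a) (hb2 : b ^ 2 = a ^ 4)
    (hconj : b⁻¹ * a * b = a⁻¹) : Nonempty (E ≃* QuaternionGroup 4) := by
  have h8 : a ^ 8 = 1 := ha ▸ pow_orderOf_eq_one a
  have hab : a * b = b * a⁻¹ := by
    have := hconj
    rw [mul_assoc] at this
    calc a * b = b * (b⁻¹ * (a * b)) := by group
    _ = b * a⁻¹ := by rw [this]
  have hc : ∀ n : ℕ, a ^ n * b = b * (a ^ n)⁻¹ := by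
    intro n
    induction n with
    | zero => simp
    | succ n ih =>
        calc a ^ (n+1) * b = a ^ n * (a * b) := by rw [pow_succ, mul_assoc]
        _ = a ^ n * b * a⁻¹ := by rw [hab, mul_assoc]
        _ = b * (a ^ n)⁻¹ * a⁻¹ := by rw [ih]
        _ = b * (a ^ (n+1))⁻¹ := by rw [pow_succ]; group
  set pw : ZMod 8 → E := fun i => a ^ i.val with hpw
  have hmul : ∀ i j, pw i * pw j = pw (i + j) := aux_pw_mul h8
  have hpw0 : pw 0 = 1 := by simp [hpw, ZMod.val_zero]
  have hneg : ∀ i, pw (-i) = (pw i)⁻¹ := by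
    intro i
    have := hmul (-i) i
    rw [neg_add_cancel, hpw0] at this
    exact eq_inv_of_mul_eq_one_left this
  have hcomm : ∀ i, pw i * b = b * pw (-i) := by
    intro i; rw [hneg]; exact hc i.val
  have h4 : pw ((4:ℕ) : ZMod 8) = a ^ 4 := by rw [hpw]; congr 1
  let F : QuaternionGroup 4 →* E :=
    { toFun := fun x => match x with
        | .a i => pw i
        | .xa i => b * pw i
      map_one' := by show pw 0 = 1; exact hpw0
      map_mul' := by
        rintro (i | i) (j | j)
        · show pw (i + j) = pw i * pw j
          exact (hmul i j).symm
        · show b * pw (j - i) = pw i * (b * pw j)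
          rw [← mul_assoc, hcomm, mul_assoc, hmul, sub_eq_neg_add]
        · show b * pw (i + j) = b * pw i * pw j
          rw [mul_assoc, hmul]
        · show pw ((4:ℕ) + j - i) = (b * pw i) * (b * pw j)
          symm
          calc (b * pw i) * (b * pw j) = b * (pw i * b) * pw j := by group
          _ = b * (b * pw (-i)) * pw j := by rw [hcomm]
          _ = b ^ 2 * (pw (-i) * pw j) := by rw [pow_two]; simp [mul_assoc]
          _ = pw ((4:ℕ):ZMod 8) * pw (-i + j) := by rw [hb2, h4, hmul]
          _ = pw ((4:ℕ) + (-i + j)) := by rw [hmul]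
          _ = pw ((4:ℕ) + j - i) := by congr 1; ring }
  have hsur : Function.Surjective F := by
    rw [← MonoidHom.range_eq_top]
    apply aux_top hcard ha hbA
    · exact ⟨QuaternionGroup.a 1, by
        show pw 1 = a
        rw [hpw]
        show a ^ ZMod.val (1 : ZMod 8) = a
        rw [show ZMod.val (1 : ZMod 8) = 1 from by decide, pow_one]⟩
    · exact ⟨QuaternionGroup.xa 0, by show b * pw 0 = b; rw [hpw0, mul_one]⟩
  have hbij : Function.Bijective F :=
    (Fintype.bijective_iff_surjective_and_card F).2 ⟨hsur, by rw [QuaternionGroup.card, hcard]⟩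
  exact ⟨(MulEquiv.ofBijective F hbij).symm⟩

end helpers

/-- The semidihedral group of order 16, given by the presentation
`⟨a, b | a⁸ = b² = 1, b⁻¹ab = a³⟩`. -/
def SD16 : Type := PresentedGroup
  ({FreeGroup.of 0 ^ 8, FreeGroup.of 1 ^ 2,
    (FreeGroup.of 1)⁻¹ * FreeGroup.of 0 * FreeGroup.of 1 * (FreeGroup.of 0 ^ 3)⁻¹} :
    Set (FreeGroup (Fin 2)))

instance : Group SD16 := by unfold SD16; infer_instance

section sd16

abbrev sdRels : Set (FreeGroup (Fin 2)) :=
  {FreeGroup.of 0 ^ 8, FreeGroup.of 1 ^ 2,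
    (FreeGroup.of 1)⁻¹ * FreeGroup.of 0 * FreeGroup.of 1 * (FreeGroup.of 0 ^ 3)⁻¹}

lemma sd_u8 : (PresentedGroup.of (rels := sdRels) 0) ^ 8 = 1 := by
  have : PresentedGroup.mk sdRels (FreeGroup.of 0 ^ 8) = 1 :=
    (QuotientGroup.eq_one_iff _).2 (Subgroup.subset_normalClosure (by left; rfl))
  rwa [map_pow] at this

lemma sd_v2 : (PresentedGroup.of (rels := sdRels) 1) ^ 2 = 1 := by
  have : PresentedGroup.mk sdRels (FreeGroup.of 1 ^ 2) = 1 :=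
    (QuotientGroup.eq_one_iff _).2 (Subgroup.subset_normalClosure (by right; left; rfl))
  rwa [map_pow] at this

lemma sd_conj : (PresentedGroup.of (rels := sdRels) 1)⁻¹ * PresentedGroup.of 0 *
    PresentedGroup.of 1 = (PresentedGroup.of (rels := sdRels) 0) ^ 3 := by
  have : PresentedGroup.mk sdRels
      ((FreeGroup.of 1)⁻¹ * FreeGroup.of 0 * FreeGroup.of 1 * (FreeGroup.of 0 ^ 3)⁻¹) = 1 :=
    (QuotientGroup.eq_one_iff _).2 (Subgroup.subset_normalClosure (by right; right; rfl))
  rw [map_mul, map_mul, map_mul, map_inv, map_inv, map_pow] at this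
  exact (mul_inv_eq_one).1 this

lemma sd_card_le : Nat.card SD16 ≤ 16 ∧ Finite SD16 := by
  set u : SD16 := PresentedGroup.of (rels := sdRels) 0 with hu
  set v : SD16 := PresentedGroup.of (rels := sdRels) 1 with hv
  have hu8 : u ^ 8 = 1 := sd_u8
  have hv2 : v ^ 2 = 1 := sd_v2
  have hvinv : v⁻¹ = v := by
    have : v * v = 1 := by rw [← pow_two]; exact hv2
    rw [inv_eq_iff_mul_eq_one, this]
  have hvu : v * u = u ^ 3 * v := by
    have h : v⁻¹ * u * v = u ^ 3 := sd_conj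
    rw [hvinv] at h
    have h2 : v * u * (v * v) = u ^ 3 * v := by rw [← mul_assoc, h]
    rwa [← pow_two, hv2, mul_one] at h2
  have hvup : ∀ k : ℕ, v * u ^ k = u ^ (3 * k) * v := by
    intro k
    induction k with
    | zero => simp
    | succ k ih =>
        calc v * u ^ (k+1) = (v * u ^ k) * u := by rw [pow_succ, mul_assoc]
        _ = u ^ (3*k) * (v * u) := by rw [ih, mul_assoc]
        _ = u ^ (3*k) * (u ^ 3 * v) := by rw [hvu]
        _ = u ^ (3*(k+1)) * v := by rw [← mul_assoc, ← pow_add]; ring_nf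
  set g : ZMod 8 × ZMod 2 → SD16 := fun p => u ^ p.1.val * v ^ p.2.val with hg
  have hval2 : ∀ j : ZMod 2, j.val = 0 ∨ j.val = 1 := by decide
  have hcast8 : ∀ i : ZMod 8, ((i.val : ℕ) : ZMod 8) = i := fun i => by
    rw [ZMod.natCast_val, ZMod.cast_id]
  have hgsurj : Function.Surjective g := by
    intro x
    have key : ∀ y : SD16, y ∈ Set.range g → ∀ z : SD16, z ∈ Set.range g →
        y * z ∈ Set.range g := by
      rintro y ⟨⟨i, j⟩, rfl⟩ z ⟨⟨k, l⟩, rfl⟩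
      simp only [hg]
      rcases hval2 j with h0 | h1
      · refine ⟨⟨i + k, l⟩, ?_⟩
        simp only [h0, pow_zero, mul_one]
        rw [← mul_assoc, aux_pw_mul hu8]
      · refine ⟨⟨i + 3 * k, 1 + l⟩, ?_⟩
        simp only [h1, pow_one]
        symm
        calc u ^ i.val * v * (u ^ k.val * v ^ l.val)
            = u ^ i.val * (v * u ^ k.val) * v ^ l.val := by simp [mul_assoc]
        _ = u ^ i.val * (u ^ (3 * k.val) * v) * v ^ l.val := by rw [hvup]
        _ = (u ^ i.val * u ^ (3 * k.val)) * (v ^ (1 : ZMod 2).val * v ^ l.val) := by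
              rw [show ((1 : ZMod 2)).val = 1 from rfl, pow_one]
              simp [mul_assoc]
        _ = u ^ (i + 3*k).val * v ^ (1 + l).val := by
              rw [aux_pw_natCast hu8 (3 * k.val),
                show ((3 * k.val : ℕ) : ZMod 8) = 3 * k by
                  push_cast [ZMod.natCast_val, ZMod.cast_id]; ring,
                aux_pw_mul hu8, aux_pw_mul hv2]
    have h1mem : (1 : SD16) ∈ Set.range g := ⟨⟨0, 0⟩, by simp [hg, ZMod.val_zero]⟩
    have hinvmem : ∀ y : SD16, y ∈ Set.range g → y⁻¹ ∈ Set.range g := by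
      rintro y ⟨⟨i, j⟩, rfl⟩
      simp only [hg]
      rcases hval2 j with h0 | h1
      · refine ⟨⟨-i, 0⟩, ?_⟩
        simp only [h0, pow_zero, mul_one, ZMod.val_zero]
        rw [aux_pw_inv hu8]
      · refine ⟨⟨3 * -i, 1⟩, ?_⟩
        simp only [h1, pow_one]
        rw [mul_inv_rev, hvinv]
        have h1' : ((3 * (-i).val : ℕ) : ZMod 8) = 3 * -i := by
          push_cast [ZMod.natCast_val, ZMod.cast_id]; ring
        calc u ^ (3 * -i).val * v ^ (1 : ZMod 2).val
            = u ^ (3 * (-i).val) * v := by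
              conv_rhs => rw [aux_pw_natCast hu8 (3 * (-i).val), h1']
              rw [show ((1 : ZMod 2)).val = 1 from rfl, pow_one]
        _ = v * u ^ ((-i).val) := (hvup _).symm
        _ = v * (u ^ i.val)⁻¹ := by rw [aux_pw_inv hu8]
    let H : Subgroup SD16 :=
      { carrier := Set.range g
        one_mem' := h1mem
        mul_mem' := fun {y z} hy hz => key y hy z hz
        inv_mem' := fun {y} hy => hinvmem y hy }
    have := PresentedGroup.generated_by sdRels H (fun j => by
      fin_cases j
      · exact ⟨⟨1, 0⟩, by
          simp only [hg, ZMod.val_zero, pow_zero, mul_one,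
            show ZMod.val (1 : ZMod 8) = 1 from by decide, pow_one]; rfl⟩
      · exact ⟨⟨0, 1⟩, by
          simp only [hg, ZMod.val_zero, pow_zero, one_mul,
            show ZMod.val (1 : ZMod 2) = 1 from by decide, pow_one]; rfl⟩) x
    exact this
  have hfin : Finite SD16 := Finite.of_surjective g hgsurj
  refine ⟨?_, hfin⟩
  have := Nat.card_le_card_of_surjective g hgsurj
  simpa using this

lemma aux_sd16 {E : Type*} [Group E] [Fintype E] (hcard : Fintype.card E = 16) {a b : E}
    (ha : orderOf a = 8) (hbA : b ∉ Subgroup.zpowers a)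
    (h2 : (a * b) ^ 2 = 1) (hconj : (a * b)⁻¹ * a * (a * b) = a ^ 3) :
    Nonempty (E ≃* SD16) := by
  have h8 : a ^ 8 = 1 := ha ▸ pow_orderOf_eq_one a
  set f : Fin 2 → E := ![a, a * b] with hf
  have hf0 : f 0 = a := rfl
  have hf1 : f 1 = a * b := rfl
  have hrels : ∀ r ∈ sdRels, FreeGroup.lift f r = 1 := by
    intro r hr
    simp only [Set.mem_insert_iff, Set.mem_singleton_iff] at hr
    rcases hr with rfl | rfl | rfl
    · rw [map_pow, FreeGroup.lift_apply_of, hf0, h8]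
    · rw [map_pow, FreeGroup.lift_apply_of, hf1, h2]
    · rw [map_mul, map_mul, map_mul, map_inv, map_inv, map_pow,
        FreeGroup.lift_apply_of, FreeGroup.lift_apply_of, hf0, hf1]
      exact mul_inv_eq_one.2 hconj
  let ψ : SD16 →* E := PresentedGroup.toGroup hrels
  have hψ0 : ψ (PresentedGroup.of 0) = a := PresentedGroup.toGroup.of hrels
  have hψ1 : ψ (PresentedGroup.of 1) = a * b := PresentedGroup.toGroup.of hrels
  have hsur : Function.Surjective ψ := by
    rw [← MonoidHom.range_eq_top]
    apply aux_top hcard ha hbA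
    · exact ⟨PresentedGroup.of 0, hψ0⟩
    · have hb : b = a⁻¹ * (a * b) := by group
      rw [hb]
      exact mul_mem (inv_mem ⟨PresentedGroup.of 0, hψ0⟩) ⟨PresentedGroup.of 1, hψ1⟩
  obtain ⟨hle, hfin⟩ := sd_card_le
  have hbij : Function.Bijective ψ := by
    haveI := hfin
    apply hsur.bijective_of_nat_card_le
    rw [Nat.card_eq_fintype_card (α := E), hcard]
    exact hle
  exact ⟨(MulEquiv.ofBijective ψ hbij).symm⟩

end sd16

theorem stmt_7 (E : Type*) [Group E] [Fintype E] (hcard : Fintype.card E = 16)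
    (D : Subgroup E) (hD : Nonempty (D ≃* QuaternionGroup 2))
    (hord : ∃ e : E, orderOf e = 8) :
    Nonempty (E ≃* QuaternionGroup 4) ∨ Nonempty (E ≃* SD16) := by
  obtain ⟨φ⟩ := hD
  obtain ⟨a, ha⟩ := hord
  set A := Subgroup.zpowers a with hAdef
  have hE16 : Nat.card E = 16 := by rw [Nat.card_eq_fintype_card, hcard]
  have hcardA : Nat.card A = 8 := by rw [hAdef, Nat.card_zpowers, ha]
  have hAidx : A.index = 2 := by
    have := Subgroup.index_mul_card A
    rw [hcardA, hE16] at this; omega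
  have hAn : A.Normal := aux_normal A hAidx
  have hcardD : Nat.card D = 8 := by
    rw [Nat.card_congr φ.toEquiv, Nat.card_eq_fintype_card, QuaternionGroup.card]
  have hDidx : D.index = 2 := by
    have := Subgroup.index_mul_card D
    rw [hcardD, hE16] at this; omega
  have h8 : a ^ 8 = 1 := ha ▸ pow_orderOf_eq_one a
  have ha4 : a ^ 4 ≠ 1 := by
    intro h
    have := orderOf_dvd_of_pow_eq_one h
    rw [ha] at this
    omega
  have q1 : ∀ x : QuaternionGroup 2, x ^ 4 = 1 := by decide
  have q2 : ∀ x y : QuaternionGroup 2, x*x = 1 → y*y = 1 → x ≠ 1 → y ≠ 1 → x = y := by decide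
  have q3 : ∀ x y : QuaternionGroup 2, x*x ≠ 1 → x*y = y*x → ∃ n : Fin 8, y = x ^ (n:ℕ) := by
    decide
  -- D is not contained in A
  have hDA : ¬ D ≤ A := by
    intro hle
    have hX : (QuaternionGroup.a 1 : QuaternionGroup 2) * QuaternionGroup.xa 0 ≠
        QuaternionGroup.xa 0 * QuaternionGroup.a 1 := by decide
    set x := φ.symm (QuaternionGroup.a 1) with hxd
    set y := φ.symm (QuaternionGroup.xa 0) with hyd
    obtain ⟨m, hm⟩ := Subgroup.mem_zpowers_iff.1 (hle x.2)
    obtain ⟨k, hk⟩ := Subgroup.mem_zpowers_iff.1 (hle y.2)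
    have hcomm : (x : E) * (y : E) = (y : E) * (x : E) := by
      rw [← hm, ← hk]; exact zpow_mul_comm a m k
    have hxy : x * y = y * x := Subtype.ext hcomm
    have := congrArg φ hxy
    rw [map_mul, map_mul, hxd, hyd, MulEquiv.apply_symm_apply, MulEquiv.apply_symm_apply] at this
    exact hX this
  obtain ⟨b, hbD, hbA⟩ := SetLike.not_le_iff_exists.1 hDA
  have ha2D : a ^ 2 ∈ D := Subgroup.sq_mem_of_index_two hDidx a
  have ha4D : a ^ 4 ∈ D := by
    have := mul_mem ha2D ha2D
    rwa [← pow_add] at this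
  -- the unique involution of D is a ^ 4
  have huniq : ∀ x, x ∈ D → x * x = 1 → x ≠ 1 → x = a ^ 4 := by
    intro x hx hxx hx1
    have hxD : (⟨x, hx⟩ : D) * ⟨x, hx⟩ = 1 := Subtype.ext hxx
    have h4D : (⟨a^4, ha4D⟩ : D) * ⟨a^4, ha4D⟩ = 1 :=
      Subtype.ext (by show a^4 * a^4 = 1; rw [← pow_add, h8])
    have e1 := q2 (φ ⟨x, hx⟩) (φ ⟨a^4, ha4D⟩)
      (by rw [← map_mul, hxD, map_one])
      (by rw [← map_mul, h4D, map_one])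
      (fun h => hx1 (congrArg Subtype.val (φ.injective (h.trans (map_one φ).symm))))
      (fun h => ha4 (congrArg Subtype.val (φ.injective (h.trans (map_one φ).symm))))
    exact congrArg Subtype.val (φ.injective e1)
  have hb4 : b ^ 4 = 1 := by
    have h := q1 (φ ⟨b, hbD⟩)
    rw [← map_pow] at h
    have h2 := φ.injective (h.trans (map_one φ).symm)
    have := congrArg Subtype.val h2
    simpa using this
  have hbb : b ^ 2 = a ^ 4 := by
    rcases eq_or_ne (b ^ 2) 1 with hb2 | hb2
    · exfalso
      apply hbA
      have hb1 : b ≠ 1 := fun h => hbA (h ▸ one_mem A)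
      have := huniq b hbD (by rw [← pow_two]; exact hb2) hb1
      rw [this]
      exact pow_mem (Subgroup.mem_zpowers a) 4
    · exact huniq (b^2) (pow_mem hbD 2) (by rw [← pow_add]; norm_num [hb4]) hb2
  -- the conjugate of a by b lies in A
  have hcA : b⁻¹ * a * b ∈ A := by
    have := hAn.conj_mem a (Subgroup.mem_zpowers a) b⁻¹
    simpa using this
  obtain ⟨m, hm⟩ := Subgroup.mem_zpowers_iff.1 hcA
  set k : ℕ := (m % 8).toNat with hkdef
  have h0 : (0:ℤ) ≤ m % 8 := Int.emod_nonneg m (by norm_num)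
  have hltm : m % 8 < 8 := Int.emod_lt_of_pos m (by norm_num)
  have hklt : k < 8 := by omega
  have hk : b⁻¹ * a * b = a ^ k := by
    rw [← hm]
    have hknat : (k : ℤ) = m % 8 := Int.toNat_of_nonneg h0
    rw [← zpow_natCast, hknat]
    conv_lhs => rw [← Int.mul_ediv_add_emod m 8]
    rw [zpow_add, zpow_mul, show ((8:ℤ)) = ((8:ℕ):ℤ) by norm_num, zpow_natCast, h8,
      one_zpow, one_mul]
  have hconjp : ∀ n : ℕ, (b⁻¹ * a * b) ^ n = b⁻¹ * a ^ n * b := by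
    intro n
    induction n with
    | zero => simp
    | succ n ih => rw [pow_succ, ih, pow_succ]; group
  -- contradiction if b commutes with a ^ 2
  have hcontra : a^2 * b = b * a^2 → False := by
    intro hcm
    have hxx : φ ⟨a^2, ha2D⟩ * φ ⟨a^2, ha2D⟩ ≠ 1 := by
      rw [← map_mul]
      intro h
      have h2 := φ.injective (h.trans (map_one φ).symm)
      have h3 : a^2 * a^2 = 1 := congrArg Subtype.val h2
      rw [← pow_add] at h3
      exact ha4 h3
    have hxy : φ ⟨a^2, ha2D⟩ * φ ⟨b, hbD⟩ = φ ⟨b, hbD⟩ * φ ⟨a^2, ha2D⟩ := by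
      rw [← map_mul, ← map_mul]
      congr 1
      exact Subtype.ext hcm
    obtain ⟨n, hn⟩ := q3 (φ ⟨a^2, ha2D⟩) (φ ⟨b, hbD⟩) hxx hxy
    rw [← map_pow] at hn
    have h5 := φ.injective hn
    have h6 := congrArg Subtype.val h5
    rw [SubmonoidClass.coe_pow] at h6
    apply hbA
    rw [show b = (⟨b, hbD⟩ : D).val from rfl, h6, ← pow_mul]
    exact pow_mem (Subgroup.mem_zpowers a) (2 * n)
  -- helper to rule out even k
  have heven : ∀ t : ℕ, (a ^ k) ^ 4 = a ^ (8 * t) → False := by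
    intro t hkt
    apply ha4
    have h1 : b⁻¹ * a ^ 4 * b = 1 := by
      rw [← hconjp 4, hk, hkt, pow_mul, h8, one_pow]
    calc a ^ 4 = b * (b⁻¹ * a ^ 4 * b) * b⁻¹ := by group
    _ = 1 := by rw [h1]; group
  interval_cases k
  · exact (heven 0 (by rw [← pow_mul])).elim
  · -- k = 1 : b commutes with a
    exfalso
    apply hcontra
    have h1 : a * b = b * a := by
      rw [pow_one] at hk
      calc a * b = b * (b⁻¹ * a * b) := by group
      _ = b * a := by rw [hk]
    calc a^2 * b = a * (a * b) := by rw [pow_two, mul_assoc]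
    _ = a * (b * a) := by rw [h1]
    _ = (a * b) * a := by rw [mul_assoc]
    _ = (b * a) * a := by rw [h1]
    _ = b * a^2 := by rw [pow_two, mul_assoc]
  · exact (heven 1 (by rw [← pow_mul])).elim
  · -- k = 3 : semidihedral case
    right
    have h9 : b⁻¹ * a ^ 3 * b = a := by
      rw [← hconjp 3, hk, ← pow_mul, show 3*3 = 8+1 from rfl, pow_add, h8, one_mul, pow_one]
    have hab : a * b = b * a ^ 3 := by
      calc a * b = b * (b⁻¹ * a * b) := by group
      _ = b * a ^ 3 := by rw [hk]
    have ha3b : a ^ 3 * b = b * a := by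
      calc a ^ 3 * b = b * (b⁻¹ * a ^ 3 * b) := by group
      _ = b * a := by rw [h9]
    have h2 : (a * b) ^ 2 = 1 := by
      rw [pow_two, hab]
      calc (b * a^3) * (b * a^3) = b * (a^3 * b) * a^3 := by group
      _ = b * (b * a) * a^3 := by rw [ha3b]
      _ = b^2 * a^4 := by
            rw [← mul_assoc, ← pow_two, mul_assoc, ← pow_succ']
      _ = 1 := by rw [hbb, ← pow_add, h8]
    have hc3 : (a * b)⁻¹ * a * (a * b) = a ^ 3 := by
      calc (a * b)⁻¹ * a * (a * b) = b⁻¹ * a * b := by group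
      _ = a ^ 3 := hk
    exact aux_sd16 hcard ha hbA h2 hc3
  · exact (heven 2 (by rw [← pow_mul])).elim
  · -- k = 5 : b commutes with a ^ 2
    exfalso
    apply hcontra
    have h1 : b⁻¹ * a^2 * b = a^2 := by
      rw [← hconjp 2, hk, ← pow_mul, show 5*2 = 8+2 from rfl, pow_add, h8, one_mul]
    calc a^2 * b = b * (b⁻¹ * a^2 * b) := by group
    _ = b * a^2 := by rw [h1]
  · exact (heven 3 (by rw [← pow_mul])).elim
  · -- k = 7 : quaternion case
    left
    have h7 : a ^ 7 = a⁻¹ := by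
      apply eq_inv_of_mul_eq_one_left
      rw [← pow_succ, h8]
    exact aux_q16 hcard ha hbA hbb (hk.trans h7)
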